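/- Let n, t_a, t_s be natural numbers with t_a ≤ t_s and t_a + 2·t_s < n, let V be any type, let C ⊆ Fin n be a finset with |C| ≤ t_a, and let e : Fin n → Finset V be a function such that (e i).card ≤ 1 for every i ∉ C (each honest party sends at most one echo message). Then there do not exist distinct values v ≠ v' in V such that both {i : Fin n | v ∈ e i} and {i : Fin n | v' ∈ e i} have cardinality at least n − t_s. (Two echo quorums of size n − t_s would have to share an honest party, since 2·(n − t_s) − t_a > n, but an honest party echoes at most one value; this is the key step in the t_a-consistency proof of Bracha's reliable broadcast Π_BB.) -/
import Mathlib


/-- Two echo quorums of size `n - t_s` must share an honest party, but an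
honest party echoes at most one value: key step of `t_a`-consistency of
Bracha's reliable broadcast. -/
theorem stmt_1 (n t_a t_s : ℕ) (hts : t_a ≤ t_s) (hlt : t_a + 2 * t_s < n)
    (V : Type*) [DecidableEq V] (C : Finset (Fin n)) (hC : C.card ≤ t_a)
    (e : Fin n → Finset V) (he : ∀ i ∉ C, (e i).card ≤ 1) :
    ¬ ∃ v v' : V, v ≠ v' ∧
      n - t_s ≤ (Finset.univ.filter (fun i : Fin n => v ∈ e i)).card ∧
      n - t_s ≤ (Finset.univ.filter (fun i : Fin n => v' ∈ e i)).card := by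
  rintro ⟨v, v', hne, hA, hB⟩
  set A := Finset.univ.filter (fun i : Fin n => v ∈ e i) with hAdef
  set B := Finset.univ.filter (fun i : Fin n => v' ∈ e i) with hBdef
  have hunion : (A ∪ B).card ≤ n := by
    simpa using Finset.card_le_card (Finset.subset_univ (A ∪ B))
  have hinter : t_a < (A ∩ B).card := by
    have := Finset.card_union_add_card_inter A B
    omega
  have hsub : ¬ (A ∩ B ⊆ C) := fun h => by
    have := Finset.card_le_card h; omega
  obtain ⟨i, hiAB, hiC⟩ := Finset.not_subset.mp hsub
  have hv : v ∈ e i := by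
    have := Finset.mem_inter.mp hiAB |>.1
    simpa [hAdef] using this
  have hv' : v' ∈ e i := by
    have := Finset.mem_inter.mp hiAB |>.2
    simpa [hBdef] using this
  have : 2 ≤ (e i).card := Finset.one_lt_card.mpr ⟨v, hv, v', hv', hne⟩
  have := he i hiC
  omega
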